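/- Let G be a graph whose complement is P5-free, and let X1, X2 be disjoint anticonnected subsets of V(G) that are complete to each other (every vertex of X1 is adjacent to every vertex of X2). Then no vertex v ∈ V(G)\(X1 ∪ X2) is mixed on both X1 and X2. -/

import Mathlib

open SimpleGraph

variable {V : Type*} {W : Type*}

/-- A vertex `v` is *mixed* on a set `X` if it has both a neighbor and a non-neighbor in `X`. -/
def Mixed (G : SimpleGraph V) (v : V) (X : Set V) : Prop :=
  (∃ x ∈ X, G.Adj v x) ∧ (∃ x ∈ X, ¬ G.Adj v x)

/-- A homogeneous set: `1 < |X| < |V(G)|` and no outside vertex is mixed on `X`. -/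
def IsHomogeneousSet [Fintype V] (G : SimpleGraph V) (X : Set V) : Prop :=
  1 < X.ncard ∧ X.ncard < Fintype.card V ∧ ∀ v ∉ X, ¬ Mixed G v X

/-- A graph is prime if it has at least four vertices and no homogeneous set. -/
def IsPrimeGraph [Fintype V] (G : SimpleGraph V) : Prop :=
  4 ≤ Fintype.card V ∧ ∀ X : Set V, ¬ IsHomogeneousSet G X

/-- A vertex is simplicial if its neighborhood is a clique. -/
def Simplicial (G : SimpleGraph V) (v : V) : Prop :=
  G.IsClique (G.neighborSet v)

/-- A vertex is antisimplicial if its non-neighborhood is a stable set. -/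
def Antisimplicial (G : SimpleGraph V) (v : V) : Prop :=
  Gᶜ.IsClique {u | ¬ G.Adj v u}

/-- `G` is `H`-free: there is no induced copy of `H` in `G`. -/
def HFree (H : SimpleGraph W) (G : SimpleGraph V) : Prop :=
  ¬ Nonempty (H ↪g G)

lemma walk_cross (G : SimpleGraph V) (X : Set V) (v : V) :
    ∀ {y x : X}, ((G.induce X)ᶜ).Walk y x → ¬ G.Adj v y → G.Adj v x →
    ∃ a b : X, ¬ G.Adj v a ∧ G.Adj v b ∧ ¬ G.Adj (a : V) b ∧ (a : V) ≠ b := by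
  intro y x p
  induction p with
  | nil => intro h1 h2; exact absurd h2 h1
  | @cons y z x h p ih =>
    intro h1 h2
    by_cases hz : G.Adj v z
    · refine ⟨y, z, h1, hz, ?_, ?_⟩
      · have := h.2
        simpa [SimpleGraph.comap_adj] using this
      · exact fun e => h.ne (Subtype.ext e)
    · exact ih hz h2

lemma mixed_cross (G : SimpleGraph V) (X : Set V)
    (hc : ((G.induce X)ᶜ).Connected) (v : V) (h : Mixed G v X) :
    ∃ a ∈ X, ∃ b ∈ X, ¬ G.Adj v a ∧ G.Adj v b ∧ ¬ G.Adj a b ∧ a ≠ b := by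
  obtain ⟨⟨x, hx, hax⟩, ⟨y, hy, hay⟩⟩ := h
  obtain ⟨p⟩ := hc ⟨y, hy⟩ ⟨x, hx⟩
  obtain ⟨a, b, h1, h2, h3, h4⟩ := walk_cross G X v p hay hax
  exact ⟨a, a.2, b, b.2, h1, h2, h3, h4⟩

theorem stmt4 (G : SimpleGraph V) (hfree : HFree (pathGraph 5) Gᶜ)
    (X1 X2 : Set V) (hdisj : Disjoint X1 X2)
    (hc1 : ((G.induce X1)ᶜ).Connected) (hc2 : ((G.induce X2)ᶜ).Connected)
    (hcomp : ∀ x ∈ X1, ∀ y ∈ X2, G.Adj x y)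
    (v : V) (hv : v ∉ X1 ∪ X2) :
    ¬ (Mixed G v X1 ∧ Mixed G v X2) := by
  rintro ⟨m1, m2⟩
  obtain ⟨b1, hb1, a1, ha1, hvb1, hva1, hab1, hne1⟩ := mixed_cross G X1 hc1 v m1
  obtain ⟨b2, hb2, a2, ha2, hvb2, hva2, hab2, hne2⟩ := mixed_cross G X2 hc2 v m2
  have hv1 : v ∉ X1 := fun h => hv (Or.inl h)
  have hv2 : v ∉ X2 := fun h => hv (Or.inr h)
  have hva1' : v ≠ a1 := fun e => hv1 (e ▸ ha1)
  have hvb1' : v ≠ b1 := fun e => hv1 (e ▸ hb1)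
  have hva2' : v ≠ a2 := fun e => hv2 (e ▸ ha2)
  have hvb2' : v ≠ b2 := fun e => hv2 (e ▸ hb2)
  have d12 : ∀ x ∈ X1, ∀ y ∈ X2, x ≠ y := fun x hx y hy e =>
    (hdisj.ne_of_mem hx hy) e
  have e11 : a1 ≠ b2 := d12 a1 ha1 b2 hb2
  have e12 : a1 ≠ a2 := d12 a1 ha1 a2 ha2
  have e13 : b1 ≠ b2 := d12 b1 hb1 b2 hb2
  have e14 : b1 ≠ a2 := d12 b1 hb1 a2 ha2
  have c1 : G.Adj a1 b2 := hcomp a1 ha1 b2 hb2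
  have c2 : G.Adj a1 a2 := hcomp a1 ha1 a2 ha2
  have c3 : G.Adj b1 b2 := hcomp b1 hb1 b2 hb2
  have c4 : G.Adj b1 a2 := hcomp b1 hb1 a2 ha2
  have na1 : ¬ G.Adj a1 b1 := fun h => hab1 h.symm
  have na2 : ¬ G.Adj a2 b2 := fun h => hab2 h.symm
  have nv1 : ¬ G.Adj b1 v := fun h => hvb1 h.symm
  have nv2 : ¬ G.Adj b2 v := fun h => hvb2 h.symm
  have s1 : G.Adj a1 v := hva1.symm
  have s2 : G.Adj a2 v := hva2.symm
  have c1' : G.Adj b2 a1 := c1.symm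
  have c2' : G.Adj a2 a1 := c2.symm
  have c3' : G.Adj b2 b1 := c3.symm
  have c4' : G.Adj a2 b1 := c4.symm
  let f : Fin 5 → V := ![a1, b1, v, b2, a2]
  refine hfree ⟨⟨⟨f, ?_⟩, ?_⟩⟩
  · intro i j hij
    fin_cases i <;> fin_cases j <;> revert hij <;>
      simp [f, hne1, hne1.symm, hne2, hne2.symm, e11, e12, e13, e14,
        e11.symm, e12.symm, e13.symm, e14.symm,
        hva1', hvb1', hva2', hvb2', hva1'.symm, hvb1'.symm, hva2'.symm, hvb2'.symm]
  · intro i j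
    change Gᶜ.Adj (f i) (f j) ↔ _
    fin_cases i <;> fin_cases j <;>
      simp [f, pathGraph_adj, compl_adj, hne1, hne1.symm, hne2, hne2.symm,
        e11, e12, e13, e14, e11.symm, e12.symm, e13.symm, e14.symm,
        hva1', hvb1', hva2', hvb2', hva1'.symm, hvb1'.symm, hva2'.symm, hvb2'.symm,
        na1, na2, nv1, nv2, hab1, hab2, hvb1, hvb2,
        hva1, hva2, s1, s2, c1, c2, c3, c4, c1', c2', c3', c4'] <;> decide
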